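/- Let A be a Codazzi tensor on M^n, n ≥ 3, with exactly two distinct eigenvalue functions μ and λ, dim V_μ = 1, and X ∈ V_μ a unit vector field. Then (Y,Z) ↦ g(∇_Y X, Z) is symmetric (equivalently X is locally a gradient field) if and only if D_Y μ = 0 for all Y ∈ V_λ. -/
import Mathlib


/-- Abstract axiomatization of the space of smooth vector fields `VF` on a
Riemannian manifold with point set `M`: a module over the ring of functions
`M → ℝ`, together with the metric `g`, the Levi-Civita connection `nabla`,
the directional derivative `D`, the gradient `grad` and the Lie bracket,
satisfying the usual laws. -/
structure RiemannianSetup (M : Type*) (VF : Type*) [AddCommGroup VF]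
    [Module (M → ℝ) VF] where
  g : VF → VF → M → ℝ
  nabla : VF → VF → VF
  D : VF → (M → ℝ) → M → ℝ
  grad : (M → ℝ) → VF
  bracket : VF → VF → VF
  g_symm : ∀ X Y, g X Y = g Y X
  g_addLeft : ∀ X Y Z, g (X + Y) Z = g X Z + g Y Z
  g_smulLeft : ∀ (f : M → ℝ) (X Y : VF), g (f • X) Y = f * g X Y
  g_nondeg : ∀ X Y : VF, (∀ Z, g X Z = g Y Z) → X = Y
  nabla_addRight : ∀ X Y Z, nabla X (Y + Z) = nabla X Y + nabla X Z
  nabla_addLeft : ∀ X Y Z, nabla (X + Y) Z = nabla X Z + nabla Y Z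
  nabla_smulLeft : ∀ (f : M → ℝ) (X Y : VF), nabla (f • X) Y = f • nabla X Y
  nabla_leibniz : ∀ (X : VF) (f : M → ℝ) (Y : VF),
    nabla X (f • Y) = D X f • Y + f • nabla X Y
  D_add : ∀ X (f₁ f₂ : M → ℝ), D X (f₁ + f₂) = D X f₁ + D X f₂
  D_mul : ∀ X (f₁ f₂ : M → ℝ), D X (f₁ * f₂) = D X f₁ * f₂ + f₁ * D X f₂
  D_const : ∀ X (r : ℝ), D X (fun _ => r) = 0
  D_addLeft : ∀ X Y (f : M → ℝ), D (X + Y) f = D X f + D Y f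
  D_smulLeft : ∀ (h : M → ℝ) X (f : M → ℝ), D (h • X) f = h * D X f
  compat : ∀ X Y Z, D X (g Y Z) = g (nabla X Y) Z + g Y (nabla X Z)
  torsion_free : ∀ X Y, bracket X Y = nabla X Y - nabla Y X
  grad_spec : ∀ (f : M → ℝ) (Z : VF), g (grad f) Z = D Z f

namespace RiemannianSetup

variable {M VF : Type*} [AddCommGroup VF] [Module (M → ℝ) VF]

/-- Covariant derivative `(∇_X A) Y` of a `(1,1)`-tensor `A`. -/
def covDeriv (S : RiemannianSetup M VF) (A : VF → VF) (X Y : VF) : VF :=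
  S.nabla X (A Y) - A (S.nabla X Y)

/-- A Codazzi tensor: a self-adjoint `(1,1)`-tensor with
`(∇_X A) Y = (∇_Y A) X` for all vector fields `X`, `Y`. -/
def IsCodazzi (S : RiemannianSetup M VF) (A : VF → VF) : Prop :=
  (∀ X Y, S.g (A X) Y = S.g X (A Y)) ∧
  (∀ X Y, S.covDeriv A X Y = S.covDeriv A Y X)

-- Auxiliary lemmas

lemma g_addRight (S : RiemannianSetup M VF) (X Y Z : VF) :
    S.g X (Y + Z) = S.g X Y + S.g X Z := by
  rw [S.g_symm, S.g_addLeft, S.g_symm Y, S.g_symm Z]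

lemma g_smulRight (S : RiemannianSetup M VF) (f : M → ℝ) (X Y : VF) :
    S.g X (f • Y) = f * S.g X Y := by
  rw [S.g_symm, S.g_smulLeft, S.g_symm]

lemma g_negLeft (S : RiemannianSetup M VF) (X Y : VF) :
    S.g (-X) Y = -S.g X Y := by
  have h : (-X : VF) = ((-1 : M → ℝ)) • X := by rw [neg_one_smul]
  rw [h, S.g_smulLeft, neg_one_mul]

lemma g_subLeft (S : RiemannianSetup M VF) (X Y Z : VF) :
    S.g (X - Y) Z = S.g X Z - S.g Y Z := by
  rw [sub_eq_add_neg, S.g_addLeft, S.g_negLeft, sub_eq_add_neg]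

lemma D_zero (S : RiemannianSetup M VF) (X : VF) : S.D X (0 : M → ℝ) = 0 :=
  S.D_const X 0

lemma D_one (S : RiemannianSetup M VF) (X : VF) : S.D X (1 : M → ℝ) = 0 :=
  S.D_const X 1

end RiemannianSetup

/-- For a Codazzi tensor with exactly two distinct eigenfunctions `μ`, `λ`,
`dim V_μ = 1` with unit section `X`: `(Y,Z) ↦ g(∇_Y X, Z)` is symmetric
(equivalently, `X` is locally a gradient field) iff `D_Y μ = 0` for all
`Y ∈ V_λ`. -/
theorem codazzi_gradient_iff_mu_constant
    {M VF : Type*} [AddCommGroup VF] [Module (M → ℝ) VF]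
    (n : ℕ) (hn : 3 ≤ n)
    (S : RiemannianSetup M VF) (A : VF → VF) (hA : S.IsCodazzi A)
    (mu lam : M → ℝ) (hdist : ∀ p, mu p ≠ lam p)
    (X : VF) (hX : A X = mu • X) (hXunit : S.g X X = 1)
    (hdecomp : ∀ Z : VF, ∃ (c : M → ℝ) (Y : VF),
      A Y = lam • Y ∧ Z = c • X + Y) :
    (∀ Y Z : VF, S.g (S.nabla Y X) Z = S.g (S.nabla Z X) Y) ↔
      (∀ Y : VF, A Y = lam • Y → S.D Y mu = 0) := by
  -- pointwise cancellation of the nowhere-vanishing factor `mu - lam`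
  have hcancel : ∀ f k : M → ℝ, (mu - lam) * f = (mu - lam) * k → f = k := by
    intro f k h
    funext p
    have hp := congrFun h p
    simp only [Pi.mul_apply, Pi.sub_apply] at hp
    exact mul_left_cancel₀ (sub_ne_zero.mpr (hdist p)) hp
  -- orthogonality: V_lam ⟂ X
  have horth : ∀ Y, A Y = lam • Y → S.g X Y = 0 := by
    intro Y hY
    have h1 : S.g (A X) Y = S.g X (A Y) := hA.1 X Y
    rw [hX, hY, S.g_smulLeft, S.g_smulRight] at h1
    funext p
    have hp := congrFun h1 p
    simp only [Pi.mul_apply] at hp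
    have h2 : (mu p - lam p) * S.g X Y p = 0 := by
      rw [sub_mul, hp, sub_self]
    have := (mul_eq_zero.mp h2).resolve_left (sub_ne_zero.mpr (hdist p))
    simpa using this
  -- unit length: g(∇_W X, X) = 0
  have hXX : ∀ W, S.g (S.nabla W X) X = 0 := by
    intro W
    have h := S.compat W X X
    rw [hXunit, S.D_one, S.g_symm X (S.nabla W X)] at h
    funext p
    have hp := congrFun h p
    simp only [Pi.add_apply, Pi.zero_apply] at hp ⊢
    linarith
  -- key identity (I): for Y ∈ V_lam, D_Y mu = (mu - lam) * g(∇_X X, Y)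
  have key1 : ∀ Y, A Y = lam • Y → S.D Y mu = (mu - lam) * S.g (S.nabla X X) Y := by
    intro Y hY
    have hYX : S.g Y X = 0 := by rw [S.g_symm]; exact horth Y hY
    have t1 : S.g (S.nabla Y (A X)) X = S.D Y mu := by
      rw [hX, S.nabla_leibniz, S.g_addLeft, S.g_smulLeft, S.g_smulLeft, hXunit, hXX Y]
      simp
    have t2 : S.g (A (S.nabla Y X)) X = 0 := by
      rw [hA.1, hX, S.g_smulRight, hXX Y, mul_zero]
    have t3 : S.g (S.nabla X (A Y)) X = lam * S.g (S.nabla X Y) X := by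
      rw [hY, S.nabla_leibniz, S.g_addLeft, S.g_smulLeft, S.g_smulLeft, hYX]
      simp
    have t4 : S.g (A (S.nabla X Y)) X = mu * S.g (S.nabla X Y) X := by
      rw [hA.1, hX, S.g_smulRight]
    have C := hA.2 Y X
    unfold RiemannianSetup.covDeriv at C
    have hC := congrArg (fun W => S.g W X) C
    simp only [S.g_subLeft, t1, t2, t3, t4] at hC
    -- g(∇_X Y, X) = - g(∇_X X, Y)
    have hcomp := S.compat X Y X
    rw [hYX, S.D_zero, S.g_symm Y (S.nabla X X)] at hcomp
    have t5 : S.g (S.nabla X Y) X = -S.g (S.nabla X X) Y :=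
      eq_neg_of_add_eq_zero_left hcomp.symm
    rw [t5] at hC
    linear_combination hC
  -- key identity (II): for Y, Z ∈ V_lam,
  -- (mu - lam) * g(∇_Y X, Z) = (D_X lam) * g(Y, Z)
  have key2 : ∀ Y Z, A Y = lam • Y → A Z = lam • Z →
      (mu - lam) * S.g (S.nabla Y X) Z = S.D X lam * S.g Y Z := by
    intro Y Z hY hZ
    have hXZ : S.g X Z = 0 := horth Z hZ
    have u1 : S.g (S.nabla Y (A X)) Z = mu * S.g (S.nabla Y X) Z := by
      rw [hX, S.nabla_leibniz, S.g_addLeft, S.g_smulLeft, S.g_smulLeft, hXZ]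
      simp
    have u2 : S.g (A (S.nabla Y X)) Z = lam * S.g (S.nabla Y X) Z := by
      rw [hA.1, hZ, S.g_smulRight]
    have u3 : S.g (S.nabla X (A Y)) Z = S.D X lam * S.g Y Z + lam * S.g (S.nabla X Y) Z := by
      rw [hY, S.nabla_leibniz, S.g_addLeft, S.g_smulLeft, S.g_smulLeft]
    have u4 : S.g (A (S.nabla X Y)) Z = lam * S.g (S.nabla X Y) Z := by
      rw [hA.1, hZ, S.g_smulRight]
    have C := hA.2 Y X
    unfold RiemannianSetup.covDeriv at C
    have hC := congrArg (fun W => S.g W Z) C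
    simp only [S.g_subLeft, u1, u2, u3, u4] at hC
    linear_combination hC
  constructor
  · -- symmetry → D_Y mu = 0 on V_lam
    intro h Y hY
    rw [key1 Y hY, h X Y, hXX Y, mul_zero]
  · -- D_Y mu = 0 on V_lam → symmetry
    intro h Y Z
    -- g(∇_X X, W) = 0 for W ∈ V_lam
    have hgXXlam : ∀ W, A W = lam • W → S.g (S.nabla X X) W = 0 := by
      intro W hW
      have h1 := key1 W hW
      rw [h W hW] at h1
      have h2 : (mu - lam) * S.g (S.nabla X X) W = (mu - lam) * 0 := by
        rw [mul_zero, ← h1]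
      exact hcancel _ _ h2
    -- symmetry on V_lam × V_lam
    have key3 : ∀ Y' Z', A Y' = lam • Y' → A Z' = lam • Z' →
        S.g (S.nabla Y' X) Z' = S.g (S.nabla Z' X) Y' := by
      intro Y' Z' hY' hZ'
      apply hcancel
      rw [key2 Y' Z' hY' hZ', key2 Z' Y' hZ' hY', S.g_symm Z' Y']
    obtain ⟨a, Y', hY', hYd⟩ := hdecomp Y
    obtain ⟨b, Z', hZ', hZd⟩ := hdecomp Z
    subst hYd hZd
    rw [S.nabla_addLeft, S.nabla_smulLeft, S.nabla_addLeft, S.nabla_smulLeft,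
      S.g_addLeft, S.g_addLeft, S.g_smulLeft, S.g_smulLeft,
      S.g_addRight, S.g_addRight, S.g_addRight, S.g_addRight,
      S.g_smulRight, S.g_smulRight, S.g_smulRight, S.g_smulRight,
      hXX X, hXX Y', hXX Z', hgXXlam Y' hY', hgXXlam Z' hZ',
      key3 Y' Z' hY' hZ']
    ring
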